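/- Let L be an irreducible almost lower triangular transition matrix on ℕ. If R : ℕ → ℝ satisfies ∑_{j=0}^{i+1} L i j · R j = R i for every i ∈ ℕ (these are finite sums since L i j = 0 for j > i + 1), then R is constant: R i = R 0 for every i. Thus, up to a multiplicative constant, the unique right eigenvector of L associated with the eigenvalue 1 is the all-ones vector. -/

import Mathlib

/-- Irreducibility of a matrix on `ℕ`. -/
def MatIrreducible (M : ℕ → ℕ → ℝ) : Prop :=
  ∀ i j : ℕ, ∃ (n : ℕ) (x : ℕ → ℕ), 0 < n ∧ x 0 = i ∧ x n = j ∧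
    ∀ k, k < n → 0 < M (x k) (x (k + 1))

/-- Theorem 3.1 (i): for an irreducible almost lower triangular transition matrix `L`
on `ℕ`, any right eigenvector for the eigenvalue `1` is constant; in particular the
all-ones vector is, up to a multiplicative constant, the only one. -/
theorem right_eigenvector_constant_almost_lower_triangular (L : ℕ → ℕ → ℝ)
    (hnn : ∀ i j, 0 ≤ L i j)
    (hrow : ∀ i, HasSum (fun j => L i j) 1)
    (hlt : ∀ i j, i + 1 < j → L i j = 0)
    (hirr : MatIrreducible L)
    (R : ℕ → ℝ)
    (hR : ∀ i, ∑ j ∈ Finset.range (i + 2), L i j * R j = R i) :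
    ∀ i, R i = R 0 := by
  -- finite row sums equal 1
  have hfin : ∀ i, ∑ j ∈ Finset.range (i + 2), L i j = 1 := by
    intro i
    have h1 : ∑' j, L i j = 1 := (hrow i).tsum_eq
    have h2 : ∑' j, L i j = ∑ j ∈ Finset.range (i + 2), L i j := by
      apply tsum_eq_sum
      intro b hb
      exact hlt i b (by simpa [Finset.mem_range] using Nat.lt_of_lt_of_le (by omega) (le_of_not_gt (fun h => hb (Finset.mem_range.mpr h))))
    rw [← h2, h1]
  -- positivity of superdiagonal entries
  have hpos : ∀ i, 0 < L i (i + 1) := by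
    intro i
    obtain ⟨n, x, hn, hx0, hxn, hstep⟩ := hirr i (i + 1)
    -- steps go up by at most 1
    have hup : ∀ k, k < n → x (k + 1) ≤ x k + 1 := by
      intro k hk
      by_contra h
      have := hlt (x k) (x (k + 1)) (by omega)
      exact absurd this (ne_of_gt (hstep k hk))
    -- crossing argument
    have : ∃ k, k < n ∧ x k ≤ i ∧ i < x (k + 1) := by
      by_contra h
      push_neg at h
      have hall : ∀ k, k ≤ n → x k ≤ i := by
        intro k hk
        induction k with
        | zero => simp [hx0]
        | succ m ih =>
          have hm : m < n := by omega
          exact h m hm (ih (by omega))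
      have := hall n le_rfl
      omega
    obtain ⟨k, hk, hle, hgt⟩ := this
    have h1 := hup k hk
    have hxk : x k = i := by omega
    have hxk1 : x (k + 1) = i + 1 := by omega
    have := hstep k hk
    rwa [hxk, hxk1] at this
  -- main induction
  have key : ∀ i, ∀ j ≤ i, R j = R 0 := by
    intro i
    induction i with
    | zero => intro j hj; interval_cases j; rfl
    | succ m ih =>
      intro j hj
      rcases Nat.lt_succ_iff_lt_or_eq.mp (Nat.lt_succ_of_le hj) with h | h
      · exact ih j (by omega)
      · subst h
        have heq := hR m
        rw [Finset.sum_range_succ] at heq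
        have hsum : ∑ j ∈ Finset.range (m + 1), L m j * R j
            = (∑ j ∈ Finset.range (m + 1), L m j) * R 0 := by
          rw [Finset.sum_mul]
          apply Finset.sum_congr rfl
          intro j hj'
          rw [ih j (by simpa [Finset.mem_range, Nat.lt_succ_iff] using hj')]
        have hrow' : ∑ j ∈ Finset.range (m + 1), L m j = 1 - L m (m + 1) := by
          have := hfin m
          rw [Finset.sum_range_succ] at this
          linarith
        rw [hsum, hrow', ih m le_rfl] at heq
        have ha := hpos m
        have : L m (m + 1) * (R (m + 1) - R 0) = 0 := by linear_combination heq
        have := mul_eq_zero.mp this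
        rcases this with h' | h'
        · exact absurd h' (ne_of_gt ha)
        · linarith
  intro i
  exact key i i le_rfl
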